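/- Let 0 < s, t < 1 and let c > 0. Then (1/(2π)) ∫_{-∞}^{∞} |Γ(c/2 + iα)|² / Γ(c) · e^{-i ln(t/s) α} dα = ( (1/2) sech( ln(t/s)/2 ) )^c = ( √(st)/(s+t) )^c. -/

import Mathlib

open Complex MeasureTheory Real FourierTransform Set

noncomputable def H0 (c : ℝ) (u : ℝ) : ℝ := (2 * Real.cosh (u/2)) ^ (-c)
noncomputable def H1 (c : ℝ) (u : ℝ) : ℝ :=
  -c * ((2 * Real.cosh (u/2)) ^ (-c-1) * Real.sinh (u/2))
noncomputable def H2 (c : ℝ) (u : ℝ) : ℝ :=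
  -c * (((-c-1) * (2 * Real.cosh (u/2)) ^ (-c-1-1) * Real.sinh (u/2)) * Real.sinh (u/2)
     + (2 * Real.cosh (u/2)) ^ (-c-1) * (Real.cosh (u/2) / 2))

lemma base_pos (u : ℝ) : 0 < 2 * Real.cosh (u/2) := by positivity

lemma hasDerivAt_base (u : ℝ) :
    HasDerivAt (fun u : ℝ => 2 * Real.cosh (u/2)) (Real.sinh (u/2)) u := by
  have h := (((hasDerivAt_id' u).div_const 2).cosh).const_mul 2
  exact h.congr_deriv (by ring)

lemma hasDerivAt_pow_base (p : ℝ) (u : ℝ) :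
    HasDerivAt (fun u : ℝ => (2 * Real.cosh (u/2)) ^ p)
      (p * (2 * Real.cosh (u/2)) ^ (p-1) * Real.sinh (u/2)) u :=
  by convert (hasDerivAt_base u).rpow_const (p := p) (Or.inl (base_pos u).ne') using 1; ring

lemma hasDerivAt_H0 (c : ℝ) (u : ℝ) : HasDerivAt (H0 c) (H1 c u) u := by
  have := hasDerivAt_pow_base (-c) u
  convert this using 1
  · rfl
  unfold H1; ring_nf

lemma hasDerivAt_H1 (c : ℝ) (u : ℝ) : HasDerivAt (H1 c) (H2 c u) u := by
  have h1 : HasDerivAt (fun u : ℝ => Real.sinh (u/2)) (Real.cosh (u/2) / 2) u := by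
    have := ((hasDerivAt_id' u).div_const 2).sinh
    convert this using 1
    ring
  exact ((hasDerivAt_pow_base (-c-1) u).mul h1).const_mul (-c)

lemma H0_pos (c u : ℝ) : 0 < H0 c u := Real.rpow_pos_of_pos (base_pos u) _

lemma base_ge (u : ℝ) : Real.exp (|u|/2) ≤ 2 * Real.cosh (u/2) := by
  rw [Real.cosh_eq]
  rcases abs_cases u with ⟨h, _⟩ | ⟨h, _⟩
  · rw [h]; have := (Real.exp_pos (-(u/2))).le
    nlinarith [Real.exp_pos (u/2)]
  · rw [h]
    have : -u/2 = -(u/2) := by ring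
    rw [this]
    nlinarith [Real.exp_pos (u/2)]

lemma H0_le {c : ℝ} (hc : 0 < c) (u : ℝ) : H0 c u ≤ Real.exp (-(c/2) * |u|) := by
  have h1 : (2 * Real.cosh (u/2)) ^ (-c) ≤ (Real.exp (|u|/2)) ^ (-c) :=
    Real.rpow_le_rpow_of_nonpos (Real.exp_pos _) (base_ge u) (by linarith)
  have h2 : (Real.exp (|u|/2)) ^ (-c) = Real.exp (-(c/2) * |u|) := by
    rw [← Real.exp_log (Real.exp_pos (|u|/2)), ← Real.exp_mul, Real.log_exp]
    ring_nf
  rw [← h2]; exact h1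

lemma integrable_exp_neg_abs {a : ℝ} (ha : 0 < a) :
    Integrable (fun u : ℝ => Real.exp (-(a * |u|))) := by
  have h1 : IntegrableOn (fun u : ℝ => Real.exp (-(a * |u|))) (Ioi 0) := by
    apply (exp_neg_integrableOn_Ioi 0 ha).congr_fun _ measurableSet_Ioi
    intro x hx
    simp only []
    rw [abs_of_pos hx]; ring_nf
  have h2 : IntegrableOn (fun u : ℝ => Real.exp (-(a * |u|))) (Iio 0) := by
    have hpre : (fun u : ℝ => -u) ⁻¹' (Iio 0) = Ioi 0 := by ext u; simp
    have key := (MeasurePreserving.integrableOn_comp_preimage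
      (Measure.measurePreserving_neg (volume : Measure ℝ))
      (Homeomorph.neg ℝ).measurableEmbedding
      (s := Iio (0:ℝ)) (f := fun u : ℝ => Real.exp (-(a * |u|))))
    rw [hpre] at key
    apply key.1
    apply h1.congr_fun _ measurableSet_Ioi
    intro x _
    simp [Function.comp, abs_neg]
  have h3 : IntegrableOn (fun u : ℝ => Real.exp (-(a * |u|))) {(0:ℝ)} := by
    exact (integrableOn_singleton_iff).2 (Or.inr (by simp))
  have h4 : IntegrableOn (fun u : ℝ => Real.exp (-(a * |u|))) (Iio 0 ∪ ({0} ∪ Ioi 0)) :=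
    h2.union (h3.union h1)
  have h5 : (Iio (0:ℝ) ∪ ({0} ∪ Ioi 0)) = univ := by
    ext u
    simp only [mem_union, mem_Iio, mem_singleton_iff, mem_Ioi, mem_univ, iff_true]
    rcases lt_trichotomy u 0 with h|h|h
    · exact Or.inl h
    · exact Or.inr (Or.inl h)
    · exact Or.inr (Or.inr h)
  rwa [h5, integrableOn_univ] at h4

lemma abs_sinh_le_cosh (x : ℝ) : |Real.sinh x| ≤ Real.cosh x := by
  rw [abs_le, Real.sinh_eq, Real.cosh_eq]
  constructor <;> nlinarith [Real.exp_pos x, Real.exp_pos (-x)]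

lemma aux_pow_cosh (p u : ℝ) :
    (2 * Real.cosh (u/2)) ^ (p-1) * Real.cosh (u/2) = (2 * Real.cosh (u/2)) ^ p / 2 := by
  rw [Real.rpow_sub (base_pos u), Real.rpow_one]
  have h := (base_pos u).ne'
  field_simp

lemma H1_bound (c u : ℝ) (hc : 0 < c) : |H1 c u| ≤ (c/2) * H0 c u := by
  unfold H1 H0
  rw [abs_mul, abs_mul, abs_neg, abs_of_pos hc,
    abs_of_pos (Real.rpow_pos_of_pos (base_pos u) _)]
  have h1 : |Real.sinh (u/2)| ≤ Real.cosh (u/2) := abs_sinh_le_cosh _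
  have h2 : (2 * Real.cosh (u/2)) ^ (-c-1) * Real.cosh (u/2)
      = (2 * Real.cosh (u/2)) ^ (-c) / 2 := by
    have := aux_pow_cosh (-c) u
    rw [← this]
  have h3 : (0:ℝ) < (2 * Real.cosh (u/2)) ^ (-c-1) := Real.rpow_pos_of_pos (base_pos u) _
  calc c * ((2 * Real.cosh (u/2)) ^ (-c-1) * |Real.sinh (u/2)|)
      ≤ c * ((2 * Real.cosh (u/2)) ^ (-c-1) * Real.cosh (u/2)) := by
        apply mul_le_mul_of_nonneg_left _ hc.le
        exact mul_le_mul_of_nonneg_left h1 h3.le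
    _ = c/2 * (2 * Real.cosh (u/2)) ^ (-c) := by rw [h2]; ring

lemma H2_bound (c u : ℝ) (hc : 0 < c) :
    |H2 c u| ≤ (c*(c+1)/4 + c/4) * H0 c u := by
  unfold H2 H0
  set A := 2 * Real.cosh (u/2) with hA
  have hApos := base_pos u
  have h1 : |Real.sinh (u/2)| ≤ Real.cosh (u/2) := abs_sinh_le_cosh _
  have hch : (0:ℝ) < Real.cosh (u/2) := Real.cosh_pos _
  have e2 : A ^ (-c-1-1) * Real.cosh (u/2) = A ^ (-c-1) / 2 := aux_pow_cosh (-c-1) u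
  have e1 : A ^ (-c-1) * Real.cosh (u/2) = A ^ (-c) / 2 := aux_pow_cosh (-c) u
  have p2 : (0:ℝ) < A ^ (-c-1-1) := Real.rpow_pos_of_pos hApos _
  have p1 : (0:ℝ) < A ^ (-c-1) := Real.rpow_pos_of_pos hApos _
  have p0 : (0:ℝ) < A ^ (-c) := Real.rpow_pos_of_pos hApos _
  have key : |(-c-1) * A ^ (-c-1-1) * Real.sinh (u/2) * Real.sinh (u/2)
      + A ^ (-c-1) * (Real.cosh (u/2) / 2)|
      ≤ (c+1) * (A ^ (-c) / 4) + A ^ (-c) / 4 := by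
    have hs2 : Real.sinh (u/2) * Real.sinh (u/2) ≤ Real.cosh (u/2) * Real.cosh (u/2) := by
      nlinarith [abs_nonneg (Real.sinh (u/2)), _root_.sq_abs (Real.sinh (u/2))]
    have b1 : |(-c-1) * A ^ (-c-1-1) * Real.sinh (u/2) * Real.sinh (u/2)|
        ≤ (c+1) * (A ^ (-c) / 4) := by
      have habs : |(-c-1) * A ^ (-c-1-1) * Real.sinh (u/2) * Real.sinh (u/2)|
          = (c+1) * A ^ (-c-1-1) * |Real.sinh (u/2) * Real.sinh (u/2)| := by
        rw [show (-c-1) * A ^ (-c-1-1) * Real.sinh (u/2) * Real.sinh (u/2)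
          = ((-c-1) * A ^ (-c-1-1)) * (Real.sinh (u/2) * Real.sinh (u/2)) by ring,
          abs_mul, abs_mul, abs_of_pos p2, abs_of_neg (by linarith : (-c-1:ℝ) < 0)]
        ring
      rw [habs]
      have : |Real.sinh (u/2) * Real.sinh (u/2)| ≤ Real.cosh (u/2) * Real.cosh (u/2) := by
        rw [abs_mul]; exact mul_le_mul h1 h1 (abs_nonneg _) hch.le
      calc (c+1) * A ^ (-c-1-1) * |Real.sinh (u/2) * Real.sinh (u/2)|
          ≤ (c+1) * A ^ (-c-1-1) * (Real.cosh (u/2) * Real.cosh (u/2)) := by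
            apply mul_le_mul_of_nonneg_left this
            positivity
        _ = (c+1) * (A ^ (-c) / 4) := by
            rw [show (c+1) * A ^ (-c-1-1) * (Real.cosh (u/2) * Real.cosh (u/2))
              = (c+1) * ((A ^ (-c-1-1) * Real.cosh (u/2)) * Real.cosh (u/2)) by ring,
              e2, show A ^ (-c-1) / 2 * Real.cosh (u/2) = A ^ (-c-1) * Real.cosh (u/2) / 2 by ring,
              e1]
            ring
    have b2 : |A ^ (-c-1) * (Real.cosh (u/2) / 2)| = A ^ (-c) / 4 := by
      rw [abs_of_pos (by positivity), show A ^ (-c-1) * (Real.cosh (u/2)/2)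
        = (A ^ (-c-1) * Real.cosh (u/2)) / 2 by ring, e1]
      ring
    calc |(-c-1) * A ^ (-c-1-1) * Real.sinh (u/2) * Real.sinh (u/2)
        + A ^ (-c-1) * (Real.cosh (u/2) / 2)|
        ≤ |(-c-1) * A ^ (-c-1-1) * Real.sinh (u/2) * Real.sinh (u/2)|
          + |A ^ (-c-1) * (Real.cosh (u/2) / 2)| := abs_add_le _ _
      _ ≤ (c+1) * (A ^ (-c) / 4) + A ^ (-c) / 4 := by rw [b2]; gcongr
  calc |(-c) * (((-c-1) * A ^ (-c-1-1) * Real.sinh (u/2)) * Real.sinh (u/2)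
      + A ^ (-c-1) * (Real.cosh (u/2) / 2))|
      = c * |(-c-1) * A ^ (-c-1-1) * Real.sinh (u/2) * Real.sinh (u/2)
        + A ^ (-c-1) * (Real.cosh (u/2) / 2)| := by
        rw [abs_mul, abs_of_neg (by linarith : (-c:ℝ) < 0)]
        ring_nf
    _ ≤ c * ((c+1) * (A ^ (-c) / 4) + A ^ (-c) / 4) := by
        apply mul_le_mul_of_nonneg_left key hc.le
    _ = (c*(c+1)/4 + c/4) * A ^ (-c) := by ring

lemma continuous_base : Continuous (fun u : ℝ => 2 * Real.cosh (u/2)) := by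
  continuity

lemma continuous_H0 (c : ℝ) : Continuous (H0 c) :=
  continuous_base.rpow_const (fun x => Or.inl (base_pos x).ne')

lemma continuous_H1 (c : ℝ) : Continuous (H1 c) := by
  unfold H1
  apply Continuous.mul continuous_const
  apply Continuous.mul (continuous_base.rpow_const (fun x => Or.inl (base_pos x).ne'))
  continuity

lemma continuous_H2 (c : ℝ) : Continuous (H2 c) := by
  unfold H2
  apply Continuous.mul continuous_const
  apply Continuous.add
  · apply Continuous.mul
    apply Continuous.mul
    apply Continuous.mul continuous_const
    exact continuous_base.rpow_const (fun x => Or.inl (base_pos x).ne')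
    · continuity
    · continuity
  · apply Continuous.mul (continuous_base.rpow_const (fun x => Or.inl (base_pos x).ne'))
    continuity

lemma integrable_H0 {c : ℝ} (hc : 0 < c) : Integrable (H0 c) := by
  apply Integrable.mono' (integrable_exp_neg_abs (by linarith : (0:ℝ) < c/2))
    (continuous_H0 c).aestronglyMeasurable
  filter_upwards with u
  rw [Real.norm_eq_abs, abs_of_pos (H0_pos c u)]
  have := H0_le hc u
  rw [show -(c/2 * |u|) = -(c/2) * |u| by ring]
  exact this

lemma integrable_H1 {c : ℝ} (hc : 0 < c) : Integrable (H1 c) := by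
  apply Integrable.mono' ((integrable_H0 hc).const_mul (c/2))
    (continuous_H1 c).aestronglyMeasurable
  filter_upwards with u
  rw [Real.norm_eq_abs]
  exact H1_bound c u hc

lemma integrable_H2 {c : ℝ} (hc : 0 < c) : Integrable (H2 c) := by
  apply Integrable.mono' ((integrable_H0 hc).const_mul (c*(c+1)/4 + c/4))
    (continuous_H2 c).aestronglyMeasurable
  filter_upwards with u
  rw [Real.norm_eq_abs]
  exact H2_bound c u hc

lemma mellin_H0 {c : ℝ} (hc : 0 < c) (α : ℝ) :
    ∫ u : ℝ, Complex.exp (α * u * Complex.I) * ((H0 c u : ℝ) : ℂ)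
      = Complex.Gamma (c/2 + α * Complex.I) * Complex.Gamma (c/2 - α * Complex.I)
        / Complex.Gamma (c : ℂ) := by
  set f : ℝ → ℝ := fun y => Real.log y - Real.log (1-y) with hf
  set f' : ℝ → ℝ := fun y => 1/y + 1/(1-y) with hf'
  set g : ℝ → ℂ := fun u => Complex.exp (α * u * Complex.I) * ((H0 c u : ℝ) : ℂ) with hg
  have himg : f '' Ioo 0 1 = univ := by
    apply eq_univ_of_forall
    intro u
    refine ⟨Real.exp u / (1 + Real.exp u), ⟨by positivity, ?_⟩, ?_⟩
    · rw [div_lt_one (by positivity)]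
      linarith [Real.exp_pos u]
    · have hpos : (0:ℝ) < 1 + Real.exp u := by positivity
      have h1 : 1 - Real.exp u / (1 + Real.exp u) = 1 / (1 + Real.exp u) := by
        field_simp
        ring
      simp only [hf, h1]
      rw [Real.log_div (Real.exp_ne_zero u) hpos.ne', Real.log_div one_ne_zero hpos.ne']
      simp [Real.log_exp]
  have hder : ∀ y ∈ Ioo (0:ℝ) 1, HasDerivWithinAt f (f' y) (Ioo 0 1) y := by
    intro y hy
    have hy0 : (0:ℝ) < y := hy.1
    have hy1 : (0:ℝ) < 1 - y := by linarith [hy.2]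
    have d1 : HasDerivAt Real.log (1/y) y := by
      simpa [one_div] using Real.hasDerivAt_log hy0.ne'
    have d2 : HasDerivAt (fun y : ℝ => Real.log (1-y)) (-(1/(1-y))) y := by
      have := (((hasDerivAt_id' y).const_sub 1)).log hy1.ne'
      simpa [one_div, neg_div] using this
    exact ((d1.sub d2).congr_deriv (by ring)).hasDerivWithinAt
  have hinj : InjOn f (Ioo 0 1) := by
    apply StrictMonoOn.injOn
    intro a ha b hb hab
    have : Real.log a < Real.log b := Real.log_lt_log ha.1 hab
    have h2 : Real.log (1-b) < Real.log (1-a) :=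
      Real.log_lt_log (by linarith [hb.2]) (by linarith)
    simp only [hf]
    linarith
  have key := integral_image_eq_integral_abs_deriv_smul measurableSet_Ioo hder hinj g
  rw [himg] at key
  rw [show (∫ u : ℝ, g u) = ∫ u in univ, g u by rw [setIntegral_univ], key]
  -- now pointwise rewrite on Ioo 0 1
  have hpt : ∀ y ∈ Ioo (0:ℝ) 1, |f' y| • g (f y)
      = (y:ℂ) ^ (c/2 + α * Complex.I - 1) * ((1:ℂ) - y) ^ (c/2 - α * Complex.I - 1) := by
    intro y hy
    have hy0 : (0:ℝ) < y := hy.1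
    have hy1 : (0:ℝ) < 1 - y := by linarith [hy.2]
    set L1 := Real.log y with hL1
    set L2 := Real.log (1-y) with hL2
    have hexpL1 : Real.exp L1 = y := Real.exp_log hy0
    have hexpL2 : Real.exp L2 = 1 - y := Real.exp_log hy1
    have hfy : f y = L1 - L2 := rfl
    have hE : Real.exp ((L1+L2)/2) ≠ 0 := Real.exp_ne_zero _
    have hbase : 2 * Real.cosh (f y / 2) = Real.exp (-((L1+L2)/2)) := by
      rw [Real.cosh_eq]
      apply mul_right_cancel₀ hE
      have e1 : Real.exp (f y / 2) * Real.exp ((L1+L2)/2) = y := by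
        rw [← Real.exp_add, hfy, show (L1-L2)/2 + (L1+L2)/2 = L1 by ring]
        exact hexpL1
      have e2 : Real.exp (-(f y / 2)) * Real.exp ((L1+L2)/2) = 1 - y := by
        rw [← Real.exp_add, hfy, show -((L1-L2)/2) + (L1+L2)/2 = L2 by ring]
        exact hexpL2
      have e3 : Real.exp (-((L1+L2)/2)) * Real.exp ((L1+L2)/2) = 1 := by
        rw [← Real.exp_add, show -((L1+L2)/2) + (L1+L2)/2 = 0 by ring]
        exact Real.exp_zero
      linear_combination e1 + e2 - e3
    have hH0 : H0 c (f y) = Real.exp ((c/2) * (L1+L2)) := by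
      unfold H0
      rw [hbase, ← Real.exp_mul, show -((L1+L2)/2) * (-c) = (c/2)*(L1+L2) by ring]
    have hfp : f' y = Real.exp (-(L1+L2)) := by
      simp only [hf']
      rw [Real.exp_neg, Real.exp_add, hexpL1, hexpL2, mul_inv]
      rw [eq_comm, inv_mul_eq_div, ← one_div, div_div]
      rw [div_add_div _ _ (by positivity : y ≠ 0) (by positivity : (1-y) ≠ 0)]
      rw [div_eq_div_iff (by positivity) (by positivity)]
      ring
    have hfppos : 0 < f' y := by rw [hfp]; exact Real.exp_pos _
    have hyC : (y:ℂ) ≠ 0 := by exact_mod_cast hy0.ne'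
    have h1yC : (1:ℂ) - (y:ℂ) ≠ 0 := by
      rw [show (1:ℂ) - (y:ℂ) = ((1-y : ℝ) : ℂ) by push_cast; ring]
      exact_mod_cast hy1.ne'
    have hlogy : Complex.log (y:ℂ) = (L1 : ℂ) := (Complex.ofReal_log hy0.le).symm
    have hlog1y : Complex.log ((1:ℂ) - (y:ℂ)) = (L2 : ℂ) := by
      rw [show (1:ℂ) - (y:ℂ) = ((1-y : ℝ) : ℂ) by push_cast; ring]
      exact (Complex.ofReal_log hy1.le).symm
    rw [abs_of_pos hfppos, hg]
    simp only []
    rw [hH0, hfp, Complex.real_smul, Complex.ofReal_exp, Complex.ofReal_exp,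
      Complex.cpow_def_of_ne_zero hyC, Complex.cpow_def_of_ne_zero h1yC,
      hlogy, hlog1y, ← Complex.exp_add, ← Complex.exp_add, ← Complex.exp_add]
    congr 1
    rw [hfy]
    push_cast
    ring
  rw [setIntegral_congr_fun measurableSet_Ioo hpt]
  -- relate to betaIntegral
  have hbeta : ∫ y in Ioo (0:ℝ) 1,
      (y:ℂ) ^ (c/2 + α * Complex.I - 1) * ((1:ℂ) - y) ^ (c/2 - α * Complex.I - 1)
      = Complex.betaIntegral (c/2 + α * Complex.I) (c/2 - α * Complex.I) := by
    rw [Complex.betaIntegral, intervalIntegral.integral_of_le zero_le_one,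
      MeasureTheory.integral_Ioc_eq_integral_Ioo]
  rw [hbeta]
  have hre1 : 0 < (c/2 + α * Complex.I).re := by simp; linarith
  have hre2 : 0 < (c/2 - α * Complex.I).re := by simp; linarith
  have hGamma := Complex.Gamma_mul_Gamma_eq_betaIntegral hre1 hre2
  have hsum : (c/2 + α * Complex.I) + (c/2 - α * Complex.I) = (c:ℂ) := by push_cast; ring
  rw [hsum] at hGamma
  have hGne : Complex.Gamma (c:ℂ) ≠ 0 := by
    rw [Complex.Gamma_ofReal]
    exact_mod_cast (Real.Gamma_pos_of_pos hc).ne'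
  rw [eq_div_iff hGne, hGamma]
  ring


section FT
variable {c : ℝ}

lemma deriv_HC0 (c : ℝ) : deriv (fun u : ℝ => ((H0 c u : ℝ) : ℂ)) = fun u => ((H1 c u : ℝ) : ℂ) := by
  funext u
  exact ((hasDerivAt_H0 c u).ofReal_comp).deriv

lemma deriv_HC1 (c : ℝ) : deriv (fun u : ℝ => ((H1 c u : ℝ) : ℂ)) = fun u => ((H2 c u : ℝ) : ℂ) := by
  funext u
  exact ((hasDerivAt_H1 c u).ofReal_comp).deriv

lemma diff_HC0 (c : ℝ) : Differentiable ℝ (fun u : ℝ => ((H0 c u : ℝ) : ℂ)) :=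
  fun u => ((hasDerivAt_H0 c u).ofReal_comp).differentiableAt

lemma diff_HC1 (c : ℝ) : Differentiable ℝ (fun u : ℝ => ((H1 c u : ℝ) : ℂ)) :=
  fun u => ((hasDerivAt_H1 c u).ofReal_comp).differentiableAt

lemma fourier_HC2 (hc : 0 < c) (ξ : ℝ) :
    𝓕 (fun u : ℝ => ((H2 c u : ℝ) : ℂ)) ξ
      = (2 * π * Complex.I * (ξ:ℂ)) • (2 * π * Complex.I * (ξ:ℂ)) •
          𝓕 (fun u : ℝ => ((H0 c u : ℝ) : ℂ)) ξ := by
  have k1 : 𝓕 (fun u : ℝ => ((H1 c u : ℝ) : ℂ))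
      = fun ξ : ℝ => (2 * π * Complex.I * (ξ:ℂ)) • 𝓕 (fun u : ℝ => ((H0 c u : ℝ) : ℂ)) ξ := by
    rw [← deriv_HC0 c]
    exact Real.fourier_deriv ((integrable_H0 hc).ofReal) (diff_HC0 c)
      (by rw [deriv_HC0 c]; exact (integrable_H1 hc).ofReal)
  have k2 : 𝓕 (fun u : ℝ => ((H2 c u : ℝ) : ℂ))
      = fun ξ : ℝ => (2 * π * Complex.I * (ξ:ℂ)) • 𝓕 (fun u : ℝ => ((H1 c u : ℝ) : ℂ)) ξ := by
    rw [← deriv_HC1 c]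
    exact Real.fourier_deriv ((integrable_H1 hc).ofReal) (diff_HC1 c)
      (by rw [deriv_HC1 c]; exact (integrable_H2 hc).ofReal)
  rw [k2]
  simp only [k1]

lemma norm_fourier_le (f : ℝ → ℂ) (ξ : ℝ) :
    ‖𝓕 f ξ‖ ≤ ∫ u : ℝ, ‖f u‖ :=
  VectorFourier.norm_fourierIntegral_le_integral_norm _ _ _ _ _

lemma continuous_fourier_HC0 (hc : 0 < c) :
    Continuous (𝓕 (fun u : ℝ => ((H0 c u : ℝ) : ℂ))) := by
  apply VectorFourier.fourierIntegral_continuous Real.continuous_fourierChar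
    ?_ ((integrable_H0 hc).ofReal)
  exact continuous_inner

lemma integrable_fourier_HC0 (hc : 0 < c) :
    Integrable (𝓕 (fun u : ℝ => ((H0 c u : ℝ) : ℂ))) := by
  set φ := 𝓕 (fun u : ℝ => ((H0 c u : ℝ) : ℂ)) with hφ
  set A := ∫ u : ℝ, ‖((H0 c u : ℝ) : ℂ)‖ with hA
  set B := ∫ u : ℝ, ‖((H2 c u : ℝ) : ℂ)‖ with hB
  have hBnn : 0 ≤ B := integral_nonneg (fun u => norm_nonneg _)
  have hπ : (0:ℝ) < π := Real.pi_pos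
  have bound : ∀ ξ : ℝ, ‖φ ξ‖ ≤ (A + B / (4 * π^2)) * (1 + ξ^2)⁻¹ := by
    intro ξ
    have b1 : ‖φ ξ‖ ≤ A := norm_fourier_le _ ξ
    have b2 : ‖𝓕 (fun u : ℝ => ((H2 c u : ℝ) : ℂ)) ξ‖ ≤ B := norm_fourier_le _ ξ
    rw [fourier_HC2 hc ξ] at b2
    have hnc : ‖(2 * π * Complex.I * (ξ:ℂ))‖ = 2 * π * |ξ| := by
      rw [norm_mul, norm_mul, norm_mul, Complex.norm_I]
      simp [Complex.norm_real, abs_of_pos hπ, Real.norm_eq_abs]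
    rw [norm_smul, norm_smul, hnc] at b2
    have hsq : |ξ| * |ξ| = ξ^2 := by rw [abs_mul_abs_self]; ring
    have b2' : 4 * π^2 * ξ^2 * ‖φ ξ‖ ≤ B := by
      calc 4 * π^2 * ξ^2 * ‖φ ξ‖ = 2 * π * |ξ| * (2 * π * |ξ| * ‖φ ξ‖) := by
            rw [← hsq]; ring
        _ ≤ B := b2
    have b2'' : ξ^2 * ‖φ ξ‖ ≤ B / (4 * π^2) := by
      rw [le_div_iff₀ (by positivity : (0:ℝ) < 4 * π^2)]
      linarith [b2']
    have h1ξ : (0:ℝ) < 1 + ξ^2 := by positivity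
    rw [← div_eq_mul_inv, le_div_iff₀ h1ξ]
    have : ‖φ ξ‖ * (1 + ξ^2) = ‖φ ξ‖ + ξ^2 * ‖φ ξ‖ := by ring
    rw [this]
    linarith [b1, b2'']
  apply Integrable.mono' ((integrable_inv_one_add_sq).const_mul (A + B / (4 * π^2)))
    (continuous_fourier_HC0 hc).aestronglyMeasurable
  filter_upwards with ξ
  exact bound ξ
end FT


lemma fourier_HC0_eq {c : ℝ} (hc : 0 < c) (ξ : ℝ) :
    𝓕 (fun u : ℝ => ((H0 c u : ℝ) : ℂ)) ξ
      = Complex.Gamma (c/2 + ((-2*π*ξ : ℝ) : ℂ) * Complex.I)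
        * Complex.Gamma (c/2 - ((-2*π*ξ : ℝ) : ℂ) * Complex.I) / Complex.Gamma (c : ℂ) := by
  rw [Real.fourier_real_eq_integral_exp_smul, ← mellin_H0 hc (-2*π*ξ)]
  congr 1
  funext v
  rw [smul_eq_mul]
  congr 2
  push_cast
  ring

lemma inversion_H0 {c : ℝ} (hc : 0 < c) (x : ℝ) :
    𝓕⁻ (𝓕 (fun u : ℝ => ((H0 c u : ℝ) : ℂ))) x = ((H0 c x : ℝ) : ℂ) := by
  have hcont : Continuous (fun u : ℝ => ((H0 c u : ℝ) : ℂ)) :=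
    Complex.continuous_ofReal.comp (continuous_H0 c)
  rw [hcont.fourierInv_fourier_eq ((integrable_H0 hc).ofReal) (integrable_fourier_HC0 hc)]

lemma H0_eq_rpow (c x : ℝ) :
    H0 c x = ((1/2) * (1 / Real.cosh (x/2))) ^ c := by
  unfold H0
  rw [Real.rpow_neg (base_pos x).le, ← Real.inv_rpow (base_pos x).le]
  congr 1
  have := (Real.cosh_pos (x/2)).ne'
  field_simp

lemma sech_eq {s t : ℝ} (hs : 0 < s) (ht : 0 < t) :
    (1/2) * (1 / Real.cosh (Real.log (t/s) / 2)) = Real.sqrt (s*t) / (s+t) := by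
  have hr : 0 < t/s := div_pos ht hs
  have ha : 0 < Real.sqrt s := Real.sqrt_pos.2 hs
  have hb : 0 < Real.sqrt t := Real.sqrt_pos.2 ht
  have has : Real.sqrt s * Real.sqrt s = s := Real.mul_self_sqrt hs.le
  have hbt : Real.sqrt t * Real.sqrt t = t := Real.mul_self_sqrt ht.le
  have h1 : Real.exp (Real.log (t/s) / 2) = Real.sqrt t / Real.sqrt s := by
    rw [show Real.log (t/s)/2 = Real.log (t/s) * (1/2 : ℝ) by ring,
      ← Real.rpow_def_of_pos hr, ← Real.sqrt_eq_rpow, Real.sqrt_div ht.le]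
  have h2 : Real.exp (-(Real.log (t/s) / 2)) = Real.sqrt s / Real.sqrt t := by
    rw [Real.exp_neg, h1, inv_div]
  rw [Real.cosh_eq, h1, h2, Real.sqrt_mul hs.le, show s + t = Real.sqrt s * Real.sqrt s
    + Real.sqrt t * Real.sqrt t by rw [has, hbt]]
  field_simp
  ring

lemma abs_Gamma_sq {c α : ℝ} :
    ((‖Complex.Gamma (c/2 + α * Complex.I)‖ ^ 2 : ℝ) : ℂ)
      = Complex.Gamma (c/2 + α * Complex.I) * Complex.Gamma (c/2 - α * Complex.I) := by
  have hconj : (starRingEnd ℂ) ((c:ℂ)/2 + α * Complex.I) = (c:ℂ)/2 - α * Complex.I := by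
    apply Complex.ext <;> simp [map_ofNat]
  rw [Complex.sq_norm, ← Complex.mul_conj, ← Complex.Gamma_conj, hconj]

/-- For `0 < s, t < 1` and `c > 0`,
`(1/(2π)) ∫_ℝ |Γ(c/2 + iα)|²/Γ(c) · e^{-i ln(t/s) α} dα
  = ((1/2) sech(ln(t/s)/2))^c = (√(st)/(s+t))^c`. -/
theorem stmt2 (s t c : ℝ) (hs : 0 < s) (hs1 : s < 1) (ht : 0 < t) (ht1 : t < 1)
    (hc : 0 < c) :
    (1 / (2 * Real.pi) : ℂ) *
        ∫ α : ℝ, ((‖Complex.Gamma (c / 2 + α * I)‖ ^ 2 / Real.Gamma c : ℝ) : ℂ) *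
          Complex.exp (-I * (Real.log (t / s)) * α)
      = (((1 / 2) * (1 / Real.cosh (Real.log (t / s) / 2))) ^ c : ℝ) ∧
    (((1 / 2) * (1 / Real.cosh (Real.log (t / s) / 2))) ^ c : ℝ)
      = ((Real.sqrt (s * t) / (s + t)) ^ c : ℝ) := by
  set x := Real.log (t/s) with hxdef
  have hπ : (0:ℝ) < π := Real.pi_pos
  constructor
  · set φ := 𝓕 (fun u : ℝ => ((H0 c u : ℝ) : ℂ)) with hφ
    set ψ : ℝ → ℂ := fun v => Complex.exp (((-2 * π * v * (-x) : ℝ) : ℂ) * Complex.I) • φ v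
      with hψ
    have hGne : (Real.Gamma c : ℂ) ≠ 0 := by
      exact_mod_cast (Real.Gamma_pos_of_pos hc).ne'
    have hstep1 : ∀ α : ℝ,
        ((‖Complex.Gamma (c / 2 + α * I)‖ ^ 2 / Real.Gamma c : ℝ) : ℂ) *
          Complex.exp (-I * (x : ℂ) * α) = ψ (-1/(2*π) * α) := by
      intro α
      have hξ : -2*π*(-1/(2*π)*α) = α := by field_simp
      have hφval : φ (-1/(2*π)*α)
          = Complex.Gamma (c/2 + (α:ℂ) * Complex.I)
            * Complex.Gamma (c/2 - (α:ℂ) * Complex.I) / Complex.Gamma (c : ℂ) := by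
        rw [hφ, fourier_HC0_eq hc, hξ]
      rw [hψ]
      simp only []
      rw [hφval, smul_eq_mul]
      rw [show ((‖Complex.Gamma (c / 2 + α * I)‖ ^ 2 / Real.Gamma c : ℝ) : ℂ)
        = ((‖Complex.Gamma (c / 2 + α * I)‖ ^ 2 : ℝ) : ℂ) / (Real.Gamma c : ℂ) by
          push_cast; ring]
      rw [abs_Gamma_sq, Complex.Gamma_ofReal]
      rw [show ((-2 * π * (-1/(2*π)*α) * (-x) : ℝ) : ℂ) = ((-(α * x) : ℝ) : ℂ) by
        norm_cast; field_simp; push_cast; ring]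
      rw [mul_comm]
      congr 1
      · push_cast; ring
    rw [MeasureTheory.integral_congr_ae (Filter.Eventually.of_forall hstep1),
      MeasureTheory.Measure.integral_comp_mul_left ψ (-1/(2*π)),
      show (∫ v, ψ v) = 𝓕 φ (-x) from
        (Real.fourier_real_eq_integral_exp_smul φ (-x)).symm,
      ← Real.fourierInv_eq_fourier_neg φ x, hφ, inversion_H0 hc x,
      H0_eq_rpow]
    have hinv : ((-1/(2*π) : ℝ))⁻¹ = -(2*π) := by field_simp
    rw [hinv, abs_neg, abs_of_pos (by positivity : (0:ℝ) < 2*π), Complex.real_smul]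
    have hπC : (π:ℂ) ≠ 0 := Complex.ofReal_ne_zero.2 hπ.ne'
    push_cast
    field_simp
  · rw [sech_eq hs ht]
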